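/- Let D ∈ ℝ^{m×m} be symmetric positive definite with extreme eigenvalues ψ_min, ψ_max, let L ∈ ℝ^{m×m} have extreme singular values σ_min, σ_max, and let G = HᵀR^{-1}H be symmetric positive semidefinite with extreme eigenvalues ν_min, ν_max. Then every positive eigenvalue ζ of A₂ = [[D, L], [Lᵀ, −G]] satisfies (1/2)(ψ_min − ν_max + sqrt((ψ_min + ν_max)² + 4σ_min²)) ≤ ζ ≤ (1/2)(ψ_max − ν_min + sqrt((ψ_max + ν_min)² + 4σ_max²)). -/

import Mathlib

open Matrix

section helpers
variable {n : Type*} [Fintype n] [DecidableEq n]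

lemma spectral_sums {M : Matrix n n ℝ} (hM : M.IsHermitian) (x : n → ℝ) :
    ∃ c : n → ℝ, (∀ j, 0 ≤ c j) ∧ ∑ j, c j = x ⬝ᵥ x ∧
      ∑ j, hM.eigenvalues j * c j = x ⬝ᵥ (M *ᵥ x) ∧
      ∑ j, hM.eigenvalues j ^ 2 * c j = (M *ᵥ x) ⬝ᵥ (M *ᵥ x) := by
  set U : Matrix n n ℝ := (hM.eigenvectorUnitary : Matrix n n ℝ) with hU
  have hU1 : star U * U = 1 := Unitary.star_mul_self_of_mem hM.eigenvectorUnitary.2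
  have hU2 : U * star U = 1 := Unitary.mul_star_self_of_mem hM.eigenvectorUnitary.2
  have hstar : star U = Uᵀ := by
    rw [Matrix.star_eq_conjTranspose, conjTranspose_eq_transpose_of_trivial]
  set z : n → ℝ := star U *ᵥ x with hz
  have key : ∀ a b : n → ℝ, (U *ᵥ a) ⬝ᵥ (U *ᵥ b) = a ⬝ᵥ b := by
    intro a b
    rw [Matrix.dotProduct_mulVec, ← Matrix.mulVec_transpose, Matrix.mulVec_mulVec, ← hstar, hU1,
      Matrix.one_mulVec]
  have hxz : U *ᵥ z = x := by rw [hz, Matrix.mulVec_mulVec, hU2, Matrix.one_mulVec]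
  have hdiag : M = U * diagonal hM.eigenvalues * star U := by
    have h := hM.spectral_theorem
    simpa using h
  have hMx : M *ᵥ x = U *ᵥ (diagonal hM.eigenvalues *ᵥ z) := by
    calc M *ᵥ x = (U * diagonal hM.eigenvalues * star U) *ᵥ x := by rw [← hdiag]
    _ = U *ᵥ (diagonal hM.eigenvalues *ᵥ z) := by
        rw [hz, Matrix.mulVec_mulVec, Matrix.mulVec_mulVec, Matrix.mul_assoc]
  refine ⟨fun j => z j ^ 2, fun j => sq_nonneg _, ?_, ?_, ?_⟩
  · rw [← hxz, key]
    simp [dotProduct, sq]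
  · rw [hMx, ← hxz, key]
    simp [dotProduct, Matrix.mulVec_diagonal, sq]
    ring_nf
    exact Finset.sum_congr rfl fun j _ => by ring
  · rw [hMx, key]
    simp [dotProduct, Matrix.mulVec_diagonal]
    exact Finset.sum_congr rfl fun j _ => by ring

end helpers

section more
variable {n : Type*} [Fintype n] [DecidableEq n]

lemma rayleigh_bounds [Nonempty n] {M : Matrix n n ℝ} (hM : M.IsHermitian) (x : n → ℝ) :
    (⨅ j, hM.eigenvalues j) * (x ⬝ᵥ x) ≤ x ⬝ᵥ (M *ᵥ x) ∧
      x ⬝ᵥ (M *ᵥ x) ≤ (⨆ j, hM.eigenvalues j) * (x ⬝ᵥ x) := by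
  obtain ⟨c, hc0, hcs, hce, -⟩ := spectral_sums hM x
  constructor
  · rw [← hce, ← hcs, Finset.mul_sum]
    exact Finset.sum_le_sum fun j _ => mul_le_mul_of_nonneg_right
      (ciInf_le (Set.Finite.bddBelow (Set.finite_range _)) j) (hc0 j)
  · rw [← hce, ← hcs, Finset.mul_sum]
    exact Finset.sum_le_sum fun j _ => mul_le_mul_of_nonneg_right
      (le_ciSup (Set.Finite.bddAbove (Set.finite_range _)) j) (hc0 j)

lemma inf_transfer {L : Matrix n n ℝ} (hL : IsUnit L) :
    (⨅ i, (isHermitian_conjTranspose_mul_self L).eigenvalues i)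
      = ⨅ i, (isHermitian_mul_conjTranspose_self L).eigenvalues i := by
  have hspec : spectrum ℝ (L * Lᴴ) = spectrum ℝ (Lᴴ * L) := by
    have h := spectrum.units_conjugate (R := ℝ) (a := Lᴴ * L) (u := hL.unit)
    rw [← h]
    have hu : (hL.unit : Matrix n n ℝ) = L := hL.unit_spec
    symm
    rw [hu, ← Matrix.mul_assoc L Lᴴ L, Matrix.mul_assoc (L * Lᴴ) L _, hL.mul_val_inv,
      Matrix.mul_one]
  have h1 := Matrix.IsHermitian.spectrum_real_eq_range_eigenvalues (isHermitian_conjTranspose_mul_self L)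
  have h2 := Matrix.IsHermitian.spectrum_real_eq_range_eigenvalues (isHermitian_mul_conjTranspose_self L)
  rw [← sInf_range, ← sInf_range, ← h1, ← h2, hspec]

end more

set_option maxHeartbeats 1000000 in
/-- Bounds on the positive eigenvalues of `A₂ = [[D, L], [Lᵀ, −G]]`, with `D` SPD (extreme
eigenvalues `ψ_min, ψ_max`), `L` invertible with extreme singular values `σ_min, σ_max`, and
`G` PSD (extreme eigenvalues `ν_min, ν_max`): every positive eigenvalue `ζ` satisfies
`(ψ_min − ν_max + sqrt((ψ_min + ν_max)² + 4σ_min²))/2 ≤ ζ ≤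
 (ψ_max − ν_min + sqrt((ψ_max + ν_min)² + 4σ_max²))/2`. -/
theorem A2_pos_eig_bounds {m : ℕ}
    (D L G : Matrix (Fin m) (Fin m) ℝ) (hD : D.PosDef) (hG : G.PosSemidef) (hL : IsUnit L)
    (hA2 : (Matrix.fromBlocks D L Lᴴ (-G)).IsHermitian)
    (ψmin ψmax νmin νmax σmin σmax : ℝ)
    (hψmin : ψmin = ⨅ i, hD.isHermitian.eigenvalues i)
    (hψmax : ψmax = ⨆ i, hD.isHermitian.eigenvalues i)
    (hνmin : νmin = ⨅ i, hG.isHermitian.eigenvalues i)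
    (hνmax : νmax = ⨆ i, hG.isHermitian.eigenvalues i)
    (hσmin : σmin = Real.sqrt (⨅ i, (isHermitian_conjTranspose_mul_self L).eigenvalues i))
    (hσmax : σmax = Real.sqrt (⨆ i, (isHermitian_conjTranspose_mul_self L).eigenvalues i)) :
    ∀ i, 0 < hA2.eigenvalues i →
      (ψmin - νmax + Real.sqrt ((ψmin + νmax) ^ 2 + 4 * σmin ^ 2)) / 2 ≤ hA2.eigenvalues i ∧
        hA2.eigenvalues i ≤
          (ψmax - νmin + Real.sqrt ((ψmax + νmin) ^ 2 + 4 * σmax ^ 2)) / 2 := by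
  intro i hζpos
  haveI : Nonempty (Fin m) := by rcases i with j | j <;> exact ⟨j⟩
  set ζ := hA2.eigenvalues i with hζdef
  set v : (Fin m ⊕ Fin m) → ℝ := ⇑(hA2.eigenvectorBasis i) with hvdef
  have hv : (fromBlocks D L Lᴴ (-G)) *ᵥ v = ζ • v := hA2.mulVec_eigenvectorBasis i
  set x : Fin m → ℝ := fun j => v (Sum.inl j) with hxdef
  set y : Fin m → ℝ := fun j => v (Sum.inr j) with hydef
  have hvel : v = Sum.elim x y := by funext j; cases j <;> rfl
  rw [hvel, fromBlocks_mulVec] at hv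
  have eq1 : D *ᵥ x + L *ᵥ y = ζ • x := funext fun j => by
    simpa [Sum.elim_comp_inl, Sum.elim_comp_inr] using congrFun hv (Sum.inl j)
  have eq2 : Lᴴ *ᵥ x = ζ • y + G *ᵥ y := funext fun j => by
    have h := congrFun hv (Sum.inr j)
    simp [Sum.elim_comp_inl, Sum.elim_comp_inr, Matrix.neg_mulVec] at h ⊢
    linarith
  set a := x ⬝ᵥ x with hadef
  set b := y ⬝ᵥ y with hbdef
  set d := x ⬝ᵥ (D *ᵥ x) with hddef
  set g := y ⬝ᵥ (G *ᵥ y) with hgdef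
  set p := x ⬝ᵥ (L *ᵥ y) with hpdef
  -- transpose-dot helpers
  have htrans : ∀ (A : Matrix (Fin m) (Fin m) ℝ) (u w : Fin m → ℝ),
      u ⬝ᵥ (Aᵀ *ᵥ w) = (A *ᵥ u) ⬝ᵥ w := fun A u w => by
    rw [Matrix.dotProduct_mulVec, Matrix.vecMul_transpose]
  have htrans2 : ∀ (A : Matrix (Fin m) (Fin m) ℝ) (u w : Fin m → ℝ),
      u ⬝ᵥ (A *ᵥ w) = (Aᵀ *ᵥ u) ⬝ᵥ w := fun A u w => by
    rw [Matrix.dotProduct_mulVec, ← Matrix.mulVec_transpose]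
  -- basic scalar identities
  have s1 : d + p = ζ * a := by
    have h : x ⬝ᵥ (D *ᵥ x + L *ᵥ y) = x ⬝ᵥ (ζ • x) := by rw [eq1]
    rw [dotProduct_add, dotProduct_smul, smul_eq_mul] at h
    exact h
  have hyLx : y ⬝ᵥ (Lᴴ *ᵥ x) = p := by
    rw [conjTranspose_eq_transpose_of_trivial, htrans, dotProduct_comm]
  have s2 : p = ζ * b + g := by
    rw [← hyLx, eq2, dotProduct_add, dotProduct_smul, smul_eq_mul]
  -- nonnegativity of squares
  have ha0 : 0 ≤ a := Finset.sum_nonneg fun j _ => mul_self_nonneg _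
  have hb0 : 0 ≤ b := Finset.sum_nonneg fun j _ => mul_self_nonneg _
  -- x ≠ 0, hence a > 0
  have hapos : 0 < a := by
    rcases ha0.lt_or_eq with h | h
    · exact h
    · exfalso
      have hx0 : x = 0 := dotProduct_self_eq_zero.mp h.symm
      have hLy : L *ᵥ y = 0 := by
        have h1 := eq1
        rw [hx0] at h1
        simpa using h1
      have hy0 : y = 0 := by
        have h2 : (↑hL.unit⁻¹ : Matrix (Fin m) (Fin m) ℝ) *ᵥ (L *ᵥ y) = y := by
          rw [Matrix.mulVec_mulVec, hL.val_inv_mul, Matrix.one_mulVec]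
        rw [hLy, Matrix.mulVec_zero] at h2
        exact h2.symm
      have hvz : hA2.eigenvectorBasis i = 0 := by
        ext j
        have h3 : v j = 0 := by rw [hvel]; cases j <;> simp [hx0, hy0]
        exact h3
      exact hA2.eigenvectorBasis.orthonormal.ne_zero i hvz
  -- Rayleigh bounds
  have hD1 : ψmin * a ≤ d := by rw [hψmin]; exact (rayleigh_bounds hD.isHermitian x).1
  have hD2 : d ≤ ψmax * a := by rw [hψmax]; exact (rayleigh_bounds hD.isHermitian x).2
  have hG1 : νmin * b ≤ g := by rw [hνmin]; exact (rayleigh_bounds hG.isHermitian y).1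
  have hνmin0 : 0 ≤ νmin := by
    rw [hνmin]; exact le_ciInf fun j => hG.eigenvalues_nonneg j
  have hνmax0 : ∀ j, hG.isHermitian.eigenvalues j ≤ νmax := fun j =>
    hνmax ▸ le_ciSup (Set.Finite.bddAbove (Set.finite_range _)) j
  have hνmaxnn : 0 ≤ νmax :=
    le_trans (hG.eigenvalues_nonneg (Classical.arbitrary _)) (hνmax0 _)
  -- singular value squares
  have hσmax2 : σmax ^ 2 = ⨆ j, (isHermitian_conjTranspose_mul_self L).eigenvalues j := by
    rw [hσmax, Real.sq_sqrt]
    exact le_trans ((posSemidef_conjTranspose_mul_self L).eigenvalues_nonneg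
      (Classical.arbitrary _)) (le_ciSup (Set.Finite.bddAbove (Set.finite_range _)) _)
  have hσmin2 : σmin ^ 2 = ⨅ j, (isHermitian_conjTranspose_mul_self L).eigenvalues j := by
    rw [hσmin, Real.sq_sqrt]
    exact le_ciInf fun j => (posSemidef_conjTranspose_mul_self L).eigenvalues_nonneg j
  -- bound on ‖L y‖²
  have hLyform : (L *ᵥ y) ⬝ᵥ (L *ᵥ y) = y ⬝ᵥ ((Lᴴ * L) *ᵥ y) := by
    rw [conjTranspose_eq_transpose_of_trivial, ← Matrix.mulVec_mulVec]
    exact (htrans L y (L *ᵥ y)).symm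
  have ht : (L *ᵥ y) ⬝ᵥ (L *ᵥ y) ≤ σmax ^ 2 * b := by
    rw [hLyform, hσmax2]
    exact (rayleigh_bounds (isHermitian_conjTranspose_mul_self L) y).2
  -- Cauchy–Schwarz
  have hCS : p ^ 2 ≤ a * ((L *ᵥ y) ⬝ᵥ (L *ᵥ y)) := by
    have h := Finset.sum_mul_sq_le_sq_mul_sq Finset.univ x (L *ᵥ y)
    simpa [hpdef, hadef, dotProduct, sq] using h
  -- lower bound on ‖Lᴴ x‖²
  have hwform : x ⬝ᵥ ((L * Lᴴ) *ᵥ x) = (Lᴴ *ᵥ x) ⬝ᵥ (Lᴴ *ᵥ x) := by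
    rw [conjTranspose_eq_transpose_of_trivial, ← Matrix.mulVec_mulVec]
    exact htrans2 L x (Lᵀ *ᵥ x)
  have hwlow : σmin ^ 2 * a ≤ (Lᴴ *ᵥ x) ⬝ᵥ (Lᴴ *ᵥ x) := by
    rw [← hwform, hσmin2, inf_transfer hL]
    exact (rayleigh_bounds (isHermitian_mul_conjTranspose_self L) x).1
  -- spectral decomposition of G applied to y
  obtain ⟨c, hc0, hcs, hce, hce2⟩ := spectral_sums hG.isHermitian y
  rw [← hbdef] at hcs
  rw [← hgdef] at hce
  have hwexp : (Lᴴ *ᵥ x) ⬝ᵥ (Lᴴ *ᵥ x)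
      = ζ ^ 2 * b + 2 * ζ * g + (G *ᵥ y) ⬝ᵥ (G *ᵥ y) := by
    rw [eq2]
    have hcomm : (G *ᵥ y) ⬝ᵥ y = g := by rw [dotProduct_comm]
    simp only [dotProduct_add, add_dotProduct, dotProduct_smul,
      smul_dotProduct, smul_eq_mul, hcomm]
    rw [← hbdef, ← hgdef]
    ring
  have hwkey : (Lᴴ *ᵥ x) ⬝ᵥ (Lᴴ *ᵥ x) ≤ (ζ + νmax) * p := by
    rw [hwexp, s2]
    have e1 : ζ ^ 2 * b + 2 * ζ * g + (G *ᵥ y) ⬝ᵥ (G *ᵥ y)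
        = ∑ j, (ζ + hG.isHermitian.eigenvalues j) ^ 2 * c j := by
      rw [← hcs, ← hce, ← hce2, Finset.mul_sum, Finset.mul_sum, ← Finset.sum_add_distrib,
        ← Finset.sum_add_distrib]
      exact Finset.sum_congr rfl fun j _ => by ring
    have e2 : (ζ + νmax) * (ζ * b + g)
        = ∑ j, (ζ + νmax) * ((ζ + hG.isHermitian.eigenvalues j) * c j) := by
      rw [← hcs, ← hce, Finset.mul_sum, ← Finset.sum_add_distrib, Finset.mul_sum]
      exact Finset.sum_congr rfl fun j _ => by ring
    rw [e1, e2]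
    refine Finset.sum_le_sum fun j _ => ?_
    have h0 : 0 ≤ hG.isHermitian.eigenvalues j := hG.eigenvalues_nonneg j
    have h1 : hG.isHermitian.eigenvalues j ≤ νmax := hνmax0 j
    have h2 : 0 ≤ (νmax - hG.isHermitian.eigenvalues j)
        * ((ζ + hG.isHermitian.eigenvalues j) * c j) :=
      mul_nonneg (sub_nonneg.2 h1) (mul_nonneg (by linarith) (hc0 j))
    have hid : (ζ + νmax) * ((ζ + hG.isHermitian.eigenvalues j) * c j)
        - (ζ + hG.isHermitian.eigenvalues j) ^ 2 * c j
        = (νmax - hG.isHermitian.eigenvalues j)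
          * ((ζ + hG.isHermitian.eigenvalues j) * c j) := by ring
    linarith
  -- scalar consequences
  have hgnn : 0 ≤ g := le_trans (mul_nonneg hνmin0 hb0) hG1
  have hpnn : 0 ≤ p := by
    rw [s2]; exact add_nonneg (mul_nonneg hζpos.le hb0) hgnn
  have hζψ : ψmin ≤ ζ := by
    have h1 : ψmin * a ≤ ζ * a := by linarith
    exact le_of_mul_le_mul_right (by linarith [h1]) hapos
  have hζν : 0 < ζ + νmax := by linarith
  have hζνmin : 0 < ζ + νmin := by linarith
  constructor
  · -- lower bound
    have hple : p ≤ (ζ - ψmin) * a := by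
      have hid : (ζ - ψmin) * a = ζ * a - ψmin * a := by ring
      linarith
    have hchain : σmin ^ 2 * a ≤ (ζ + νmax) * ((ζ - ψmin) * a) :=
      le_trans (le_trans hwlow hwkey) (mul_le_mul_of_nonneg_left hple hζν.le)
    have hB4 : σmin ^ 2 ≤ (ζ + νmax) * (ζ - ψmin) := by
      have hid : (ζ + νmax) * ((ζ - ψmin) * a) = ((ζ + νmax) * (ζ - ψmin)) * a := by ring
      rw [hid] at hchain
      exact le_of_mul_le_mul_right (by linarith [hchain]) hapos
    have hs : Real.sqrt ((ψmin + νmax) ^ 2 + 4 * σmin ^ 2) ≤ 2 * ζ + νmax - ψmin := by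
      have hid : (2 * ζ + νmax - ψmin) ^ 2
          = (ψmin + νmax) ^ 2 + 4 * ((ζ + νmax) * (ζ - ψmin)) := by ring
      have h1 : (ψmin + νmax) ^ 2 + 4 * σmin ^ 2 ≤ (2 * ζ + νmax - ψmin) ^ 2 := by
        rw [hid]; linarith
      calc Real.sqrt ((ψmin + νmax) ^ 2 + 4 * σmin ^ 2)
          ≤ Real.sqrt ((2 * ζ + νmax - ψmin) ^ 2) := Real.sqrt_le_sqrt h1
        _ = 2 * ζ + νmax - ψmin := Real.sqrt_sq (by linarith)
    linarith
  · -- upper bound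
    have hpν : p * (ζ + νmin) ≤ σmax ^ 2 * a := by
      rcases le_or_gt p 0 with hp | hp
      · have h2 : p * (ζ + νmin) ≤ 0 := by
          have h3 := mul_le_mul_of_nonneg_right hp hζνmin.le
          simpa using h3
        have h4 : 0 ≤ σmax ^ 2 * a := by positivity
        linarith
      · have hbp : (ζ + νmin) * b ≤ p := by
          have hid : (ζ + νmin) * b = ζ * b + νmin * b := by ring
          linarith
        have hCS' : p ^ 2 ≤ a * (σmax ^ 2 * b) :=
          le_trans hCS (mul_le_mul_of_nonneg_left ht ha0)
        rcases hb0.lt_or_eq with hbpos | hbz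
        · have h3 : p * ((ζ + νmin) * b) ≤ p * p := mul_le_mul_of_nonneg_left hbp hp.le
          have h4 : (p * (ζ + νmin)) * b ≤ (σmax ^ 2 * a) * b := by
            have hid1 : p * ((ζ + νmin) * b) = (p * (ζ + νmin)) * b := by ring
            have hid2 : a * (σmax ^ 2 * b) = (σmax ^ 2 * a) * b := by ring
            have hpp : p ^ 2 = p * p := sq p
            rw [hid1] at h3
            linarith
          exact le_of_mul_le_mul_right h4 hbpos
        · exfalso
          have h5 : p ^ 2 ≤ 0 := by rw [← hbz] at hCS'; simpa using hCS'
          have h6 : 0 < p ^ 2 := by positivity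
          linarith
    have hkey : (ζ - ψmax) * (ζ + νmin) ≤ σmax ^ 2 := by
      have h1 : (ζ - ψmax) * a ≤ p := by
        have hid : (ζ - ψmax) * a = ζ * a - ψmax * a := by ring
        linarith
      have h2 : ((ζ - ψmax) * (ζ + νmin)) * a ≤ σmax ^ 2 * a := by
        calc ((ζ - ψmax) * (ζ + νmin)) * a = ((ζ - ψmax) * a) * (ζ + νmin) := by ring
          _ ≤ p * (ζ + νmin) := mul_le_mul_of_nonneg_right h1 hζνmin.le
          _ ≤ σmax ^ 2 * a := hpν
      exact le_of_mul_le_mul_right h2 hapos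
    rcases le_or_gt (2 * ζ) (ψmax - νmin) with h | h
    · have h0 := Real.sqrt_nonneg ((ψmax + νmin) ^ 2 + 4 * σmax ^ 2)
      linarith
    · have hs : 2 * ζ + νmin - ψmax ≤ Real.sqrt ((ψmax + νmin) ^ 2 + 4 * σmax ^ 2) := by
        have hid : (2 * ζ + νmin - ψmax) ^ 2
            = (ψmax + νmin) ^ 2 + 4 * ((ζ - ψmax) * (ζ + νmin)) := by ring
        have h1 : (2 * ζ + νmin - ψmax) ^ 2 ≤ (ψmax + νmin) ^ 2 + 4 * σmax ^ 2 := by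
          rw [hid]; linarith
        calc 2 * ζ + νmin - ψmax
            = Real.sqrt ((2 * ζ + νmin - ψmax) ^ 2) := (Real.sqrt_sq (by linarith)).symm
          _ ≤ Real.sqrt ((ψmax + νmin) ^ 2 + 4 * σmax ^ 2) := Real.sqrt_le_sqrt h1
      linarith
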